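/- Suppose x⋆ is the unique minimizer of ‖x‖₁ subject to ‖y − Ax‖₂ ≤ ε, and t > 0 satisfies ‖x‖₁ − ‖x⋆‖₁ ≥ t‖x − x⋆‖₂ for all x with ‖y − Ax‖₂ ≤ ε and ‖x − x⋆‖₂ ≤ M₀. Let x_{n+1} = xₙ − γP sgn(xₙ) with ‖y − Axₙ‖₂ ≤ ε and ‖xₙ − x⋆‖₂ ≤ M₀. Then for any μ > 1, if ‖xₙ − x⋆‖₂ ≥ γ(μ/(2t))·max_x‖P sgn(x)‖₂² + (2/t)√(Nλ)·ε, then ‖x_{n+1} − x⋆‖₂² ≤ ‖xₙ − x⋆‖₂² − γ²(μ−1)·max_x‖P sgn(x)‖₂², where λ is the largest eigenvalue of (AAᵀ)⁻¹. -/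

import Mathlib

open Matrix BigOperators

noncomputable def l1 {N : ℕ} (x : Fin N → ℝ) : ℝ := ∑ i, |x i|

noncomputable def l2 {N : ℕ} (x : Fin N → ℝ) : ℝ := Real.sqrt (∑ i, (x i) ^ 2)

noncomputable def sgn {N : ℕ} (x : Fin N → ℝ) : Fin N → ℝ := fun i => Real.sign (x i)

noncomputable def Pmat {M N : ℕ} (A : Matrix (Fin M) (Fin N) ℝ) : Matrix (Fin N) (Fin N) ℝ :=
  1 - Aᵀ * (A * Aᵀ)⁻¹ * A

-- basic l2 lemmas
lemma dot_self_nonneg {N : ℕ} (x : Fin N → ℝ) : 0 ≤ x ⬝ᵥ x :=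
  Finset.sum_nonneg fun i _ => mul_self_nonneg _

lemma l2_sq {N : ℕ} (x : Fin N → ℝ) : (l2 x) ^ 2 = x ⬝ᵥ x := by
  rw [l2, Real.sq_sqrt (Finset.sum_nonneg fun i _ => sq_nonneg _)]
  simp [dotProduct, sq]

lemma l2_nonneg {N : ℕ} (x : Fin N → ℝ) : 0 ≤ l2 x := Real.sqrt_nonneg _

lemma l2_eq_sqrt_dot {N : ℕ} (x : Fin N → ℝ) : l2 x = Real.sqrt (x ⬝ᵥ x) := by
  rw [l2]; congr 1; simp [dotProduct, sq]

lemma cauchy_schwarz {N : ℕ} (x y : Fin N → ℝ) : |x ⬝ᵥ y| ≤ l2 x * l2 y := by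
  have h := Finset.sum_mul_sq_le_sq_mul_sq Finset.univ x y
  have : (x ⬝ᵥ y) ^ 2 ≤ (l2 x * l2 y) ^ 2 := by
    rw [mul_pow, l2_sq, l2_sq]
    simpa [dotProduct, sq] using h
  calc |x ⬝ᵥ y| = Real.sqrt ((x ⬝ᵥ y) ^ 2) := (Real.sqrt_sq_eq_abs _).symm
    _ ≤ Real.sqrt ((l2 x * l2 y) ^ 2) := Real.sqrt_le_sqrt this
    _ = l2 x * l2 y := Real.sqrt_sq (mul_nonneg (l2_nonneg x) (l2_nonneg y))

lemma l2_add_le {N : ℕ} (x y : Fin N → ℝ) : l2 (x + y) ≤ l2 x + l2 y := by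
  have hxy : x ⬝ᵥ y ≤ l2 x * l2 y := le_trans (le_abs_self _) (cauchy_schwarz x y)
  have hexp : (x + y) ⬝ᵥ (x + y) ≤ (l2 x + l2 y) ^ 2 := by
    have : (x + y) ⬝ᵥ (x + y) = x ⬝ᵥ x + 2 * (x ⬝ᵥ y) + y ⬝ᵥ y := by
      simp [add_dotProduct, dotProduct_add, dotProduct_comm y x]; ring
    rw [this, ← l2_sq, ← l2_sq]; nlinarith [l2_nonneg x, l2_nonneg y]
  calc l2 (x + y) = Real.sqrt ((x + y) ⬝ᵥ (x + y)) := l2_eq_sqrt_dot _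
    _ ≤ Real.sqrt ((l2 x + l2 y) ^ 2) := Real.sqrt_le_sqrt hexp
    _ = l2 x + l2 y := Real.sqrt_sq (add_nonneg (l2_nonneg x) (l2_nonneg y))

lemma l2_neg {N : ℕ} (x : Fin N → ℝ) : l2 (-x) = l2 x := by
  simp [l2]

-- quadratic form bound by largest eigenvalue upper bound
lemma quad_bound {M : ℕ} (B : Matrix (Fin M) (Fin M) ℝ) (hB : B.IsHermitian) (lam : ℝ)
    (hub : ∀ i, hB.eigenvalues i ≤ lam) (w : Fin M → ℝ) :
    w ⬝ᵥ (B *ᵥ w) ≤ lam * (w ⬝ᵥ w) := by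
  set U : Matrix (Fin M) (Fin M) ℝ := (hB.eigenvectorUnitary : Matrix (Fin M) (Fin M) ℝ) with hU
  have hUmem := hB.eigenvectorUnitary.2
  have hUU : U * star U = 1 := (Matrix.mem_unitaryGroup_iff).mp hUmem
  set c : Fin M → ℝ := (star U) *ᵥ w with hc
  have key : ∀ z : Fin M → ℝ, w ⬝ᵥ (U *ᵥ z) = c ⬝ᵥ z := by
    intro z
    rw [dotProduct_mulVec, hc, ← mulVec_transpose]
    congr 1
  have hdec : B *ᵥ w = U *ᵥ ((Matrix.diagonal (RCLike.ofReal ∘ hB.eigenvalues)) *ᵥ c) := by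
    conv_lhs => rw [hB.spectral_theorem]
    rw [Unitary.conjStarAlgAut_apply, hc, mulVec_mulVec, mulVec_mulVec]
  have hcc : c ⬝ᵥ c = w ⬝ᵥ w := by
    rw [hc, ← key, mulVec_mulVec, hUU, one_mulVec]
  rw [hdec, key, ← hcc]
  have : c ⬝ᵥ ((Matrix.diagonal (RCLike.ofReal ∘ hB.eigenvalues)) *ᵥ c)
      = ∑ i, hB.eigenvalues i * (c i * c i) := by
    simp [dotProduct, Matrix.mulVec_diagonal]
    exact Finset.sum_congr rfl fun i _ => by ring
  rw [this, dotProduct, Finset.mul_sum]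
  exact Finset.sum_le_sum fun i _ =>
    mul_le_mul_of_nonneg_right (hub i) (mul_self_nonneg _)

lemma mul_sign_self (a : ℝ) : a * Real.sign a = |a| := by
  rcases lt_trichotomy a 0 with h|h|h
  · rw [Real.sign_of_neg h, abs_of_neg h]; ring
  · simp [h]
  · rw [Real.sign_of_pos h, abs_of_pos h]; ring

lemma abs_sign_le_one (a : ℝ) : |Real.sign a| ≤ 1 := by
  rcases lt_trichotomy a 0 with h|h|h
  · simp [Real.sign_of_neg h]
  · simp [h]
  · simp [Real.sign_of_pos h]

set_option maxHeartbeats 2000000 in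
theorem stmt16 {M N : ℕ} (A : Matrix (Fin M) (Fin N) ℝ) (hinv : IsUnit (A * Aᵀ))
    (y : Fin M → ℝ) (ε : ℝ) (hε : 0 ≤ ε)
    (xs : Fin N → ℝ) (hxs : l2 (y - A *ᵥ xs) ≤ ε)
    (huniq : ∀ x : Fin N → ℝ, l2 (y - A *ᵥ x) ≤ ε → x ≠ xs → l1 xs < l1 x)
    (M₀ t : ℝ) (hM₀ : 0 < M₀) (ht : 0 < t)
    (hgrow : ∀ x : Fin N → ℝ, l2 (y - A *ᵥ x) ≤ ε → l2 (x - xs) ≤ M₀ →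
      l1 x - l1 xs ≥ t * l2 (x - xs))
    (C : ℝ) (hC : IsGreatest (Set.range fun z : Fin N → ℝ => (l2 (Pmat A *ᵥ sgn z)) ^ 2) C)
    (lam : ℝ) (hlam : IsGreatest (spectrum ℝ ((A * Aᵀ)⁻¹)) lam)
    (γ μ : ℝ) (hγ : 0 < γ) (hμ : 1 < μ)
    (xn xn1 : Fin N → ℝ) (hrec : xn1 = xn - γ • (Pmat A *ᵥ sgn xn))
    (hfeas : l2 (y - A *ᵥ xn) ≤ ε) (hbound : l2 (xn - xs) ≤ M₀)
    (hfar : l2 (xn - xs) ≥ γ * (μ / (2 * t)) * C + 2 / t * Real.sqrt (N * lam) * ε) :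
    (l2 (xn1 - xs)) ^ 2 ≤ (l2 (xn - xs)) ^ 2 - γ ^ 2 * (μ - 1) * C := by
  classical
  have hdet : IsUnit (A * Aᵀ).det := (Matrix.isUnit_iff_isUnit_det _).mp hinv
  -- M must be positive since the spectrum is nonempty
  rcases Nat.eq_zero_or_pos M with hM0 | hMpos
  · exfalso
    subst hM0
    haveI : Subsingleton (Matrix (Fin 0) (Fin 0) ℝ) :=
      ⟨fun a b => by ext i j; exact i.elim0⟩
    exact (spectrum.mem_iff.mp hlam.1) (isUnit_of_subsingleton _)
  -- A * Aᵀ is positive definite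
  have hherm : (A * Aᵀ).IsHermitian := by
    have := Matrix.isHermitian_mul_conjTranspose_self A
    simpa [Matrix.conjTranspose_eq_transpose_of_trivial] using this
  have hpd : (A * Aᵀ).PosDef := by
    refine Matrix.PosDef.of_dotProduct_mulVec_pos hherm fun x hx => ?_
    have hx' : Aᵀ *ᵥ x ≠ 0 := by
      intro h0
      apply hx
      have h1 : (A * Aᵀ) *ᵥ x = 0 := by
        rw [← Matrix.mulVec_mulVec, h0, Matrix.mulVec_zero]
      have := congrArg (fun z => (A * Aᵀ)⁻¹ *ᵥ z) h1
      simpa [Matrix.mulVec_mulVec, Matrix.nonsing_inv_mul _ hdet, Matrix.one_mulVec,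
        Matrix.mulVec_zero] using this
    have heq : star x ⬝ᵥ ((A * Aᵀ) *ᵥ x) = (Aᵀ *ᵥ x) ⬝ᵥ (Aᵀ *ᵥ x) := by
      have : (star x : Fin M → ℝ) = x := by ext i; simp
      rw [this, ← Matrix.mulVec_mulVec, Matrix.dotProduct_mulVec, Matrix.mulVec_transpose]
    rw [heq]
    exact lt_of_le_of_ne (dot_self_nonneg _)
      (fun h => hx' (dotProduct_self_eq_zero.mp h.symm))
  have hBpd : ((A * Aᵀ)⁻¹).PosDef := hpd.inv
  have hBh : ((A * Aᵀ)⁻¹).IsHermitian := hBpd.1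
  have hub : ∀ i, hBh.eigenvalues i ≤ lam := fun i =>
    hlam.2 (hBh.eigenvalues_mem_spectrum_real i)
  have hlampos : 0 < lam :=
    lt_of_lt_of_le (hBpd.eigenvalues_pos ⟨0, hMpos⟩) (hub ⟨0, hMpos⟩)
  -- set up notation
  set d : Fin N → ℝ := xn - xs with hd
  set s : Fin N → ℝ := sgn xn with hs
  set v : Fin N → ℝ := Pmat A *ᵥ s with hv
  set w : Fin M → ℝ := A *ᵥ d with hw
  -- symmetry of P
  have hBsymm : ((A * Aᵀ)⁻¹)ᵀ = (A * Aᵀ)⁻¹ := by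
    rw [Matrix.transpose_nonsing_inv, Matrix.transpose_mul, Matrix.transpose_transpose]
  have hP : (Pmat A)ᵀ = Pmat A := by
    simp [Pmat, Matrix.transpose_sub, Matrix.transpose_mul, Matrix.transpose_transpose,
      hBsymm, Matrix.mul_assoc]
  have hsym : d ⬝ᵥ v = (Pmat A *ᵥ d) ⬝ᵥ s := by
    rw [hv, Matrix.dotProduct_mulVec, ← Matrix.mulVec_transpose, hP]
  have hPd : Pmat A *ᵥ d = d - Aᵀ *ᵥ ((A * Aᵀ)⁻¹ *ᵥ w) := by
    rw [Pmat, Matrix.sub_mulVec, Matrix.one_mulVec, hw,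
      Matrix.mulVec_mulVec, Matrix.mulVec_mulVec]
  set E : ℝ := (Aᵀ *ᵥ ((A * Aᵀ)⁻¹ *ᵥ w)) ⬝ᵥ s with hE
  have hdv : d ⬝ᵥ v = d ⬝ᵥ s - E := by
    rw [hsym, hPd, sub_dotProduct]
  -- lower bound on d ⬝ᵥ s
  have hds : d ⬝ᵥ s ≥ t * l2 d := by
    have h1 : l1 xn - l1 xs ≥ t * l2 d := hgrow xn hfeas hbound
    have h2 : d ⬝ᵥ s ≥ l1 xn - l1 xs := by
      have : l1 xn - l1 xs = ∑ i, (|xn i| - |xs i|) := by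
        rw [Finset.sum_sub_distrib]; rfl
      rw [this, dotProduct]
      refine Finset.sum_le_sum fun i _ => ?_
      have e1 : d i * s i = xn i * Real.sign (xn i) - xs i * Real.sign (xn i) := by
        simp [hd, hs, sgn]; ring
      rw [e1, mul_sign_self]
      have : xs i * Real.sign (xn i) ≤ |xs i| := by
        calc xs i * Real.sign (xn i) ≤ |xs i * Real.sign (xn i)| := le_abs_self _
          _ = |xs i| * |Real.sign (xn i)| := abs_mul _ _
          _ ≤ |xs i| * 1 := mul_le_mul_of_nonneg_left (abs_sign_le_one _) (abs_nonneg _)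
          _ = |xs i| := mul_one _
      linarith
    linarith
  -- bound on l2 w
  have hw2ε : l2 w ≤ 2 * ε := by
    have hrepr : w = (y - A *ᵥ xs) + (-(y - A *ᵥ xn)) := by
      rw [hw, hd, Matrix.mulVec_sub]; abel
    calc l2 w ≤ l2 (y - A *ᵥ xs) + l2 (-(y - A *ᵥ xn)) := hrepr ▸ l2_add_le _ _
      _ = l2 (y - A *ᵥ xs) + l2 (y - A *ᵥ xn) := by rw [l2_neg]
      _ ≤ 2 * ε := by linarith
  -- bound on E
  have hl2s : l2 s ≤ Real.sqrt N := by
    rw [l2]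
    apply Real.sqrt_le_sqrt
    calc ∑ i, (s i) ^ 2 ≤ ∑ _i : Fin N, (1 : ℝ) := by
          refine Finset.sum_le_sum fun i _ => ?_
          rw [← sq_abs]
          exact pow_le_one₀ (abs_nonneg _) (abs_sign_le_one _)
      _ = N := by simp
  have hnorm2 : (l2 (Aᵀ *ᵥ ((A * Aᵀ)⁻¹ *ᵥ w))) ^ 2 ≤ lam * (2 * ε) ^ 2 := by
    rw [l2_sq]
    set u : Fin M → ℝ := (A * Aᵀ)⁻¹ *ᵥ w with hu
    have e1 : (Aᵀ *ᵥ u) ⬝ᵥ (Aᵀ *ᵥ u) = w ⬝ᵥ ((A * Aᵀ)⁻¹ *ᵥ w) := by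
      rw [Matrix.dotProduct_mulVec, Matrix.vecMul_transpose, Matrix.mulVec_mulVec, hu,
        Matrix.mulVec_mulVec, Matrix.mul_nonsing_inv _ hdet, Matrix.one_mulVec]
    rw [e1]
    have e2 : w ⬝ᵥ ((A * Aᵀ)⁻¹ *ᵥ w) ≤ lam * (w ⬝ᵥ w) := quad_bound _ hBh lam hub w
    have e3 : w ⬝ᵥ w ≤ (2 * ε) ^ 2 := by
      rw [← l2_sq]
      have := l2_nonneg w
      nlinarith
    nlinarith
  have hEbound : |E| ≤ 2 * Real.sqrt (N * lam) * ε := by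
    have hcs := cauchy_schwarz (Aᵀ *ᵥ ((A * Aᵀ)⁻¹ *ᵥ w)) s
    have h1 : l2 (Aᵀ *ᵥ ((A * Aᵀ)⁻¹ *ᵥ w)) ≤ Real.sqrt lam * (2 * ε) := by
      have := Real.sqrt_le_sqrt hnorm2
      rwa [Real.sqrt_sq (l2_nonneg _), Real.sqrt_mul hlampos.le,
        Real.sqrt_sq (by positivity)] at this
    have h2 : |E| ≤ (Real.sqrt lam * (2 * ε)) * Real.sqrt N := by
      calc |E| ≤ l2 (Aᵀ *ᵥ ((A * Aᵀ)⁻¹ *ᵥ w)) * l2 s := hcs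
        _ ≤ (Real.sqrt lam * (2 * ε)) * Real.sqrt N := by
            apply mul_le_mul h1 hl2s (l2_nonneg _) (by positivity)
    rw [Real.sqrt_mul (Nat.cast_nonneg N)] at *
    nlinarith [Real.sqrt_nonneg lam, Real.sqrt_nonneg (N : ℝ), h2]
  -- lower bound on d ⬝ᵥ v
  have hdvlb : d ⬝ᵥ v ≥ γ * μ * C / 2 := by
    have h1 : t * l2 d ≥ t * (γ * (μ / (2 * t)) * C + 2 / t * Real.sqrt (N * lam) * ε) :=
      mul_le_mul_of_nonneg_left hfar ht.le
    have h2 : t * (γ * (μ / (2 * t)) * C + 2 / t * Real.sqrt (N * lam) * ε)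
        = γ * μ * C / 2 + 2 * Real.sqrt (N * lam) * ε := by
      field_simp
    rw [h2] at h1
    have h3 : E ≤ 2 * Real.sqrt (N * lam) * ε := le_trans (le_abs_self _) hEbound
    rw [hdv]
    linarith
  -- upper bound on v ⬝ᵥ v
  have hvC : v ⬝ᵥ v ≤ C := by
    rw [← l2_sq]
    exact hC.2 ⟨xn, rfl⟩
  -- conclusion
  have h1 : xn1 - xs = d - γ • v := by rw [hrec, hd, sub_right_comm]
  rw [h1, l2_sq]
  have hexp : (d - γ • v) ⬝ᵥ (d - γ • v)
      = d ⬝ᵥ d - 2 * γ * (d ⬝ᵥ v) + γ ^ 2 * (v ⬝ᵥ v) := by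
    simp [sub_dotProduct, dotProduct_sub, smul_dotProduct,
      dotProduct_smul, dotProduct_comm v d, smul_eq_mul]
    ring
  rw [hexp, ← l2_sq d]
  have k1 := mul_le_mul_of_nonneg_left hdvlb (by linarith : (0:ℝ) ≤ 2 * γ)
  have k2 := mul_le_mul_of_nonneg_left hvC (sq_nonneg γ)
  nlinarith [k1, k2]
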